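/- Let (G,H,K) be a BX2P-folder. Then H is a 2-group if and only if G is a 2-group. -/
import Mathlib


/-- `(G,H,K)` is a BX2P-folder: a loop folder (`K` a transversal to all
conjugates of `H` in `G`, `1 ∈ K`) associated to a Bruck loop of 2-power
exponent: `K` is a twisted subgroup, every element of `K` has 2-power order,
`H` acts on `K` by conjugation, and there is an involutory automorphism `τ`
of `G` centralizing `H` and inverting every element of `K`, such that
`Λ = τK` is invariant under `G`-conjugation in `G⟨τ⟩` (equivalently,
`(τ g)⁻¹ * k * g ∈ K` for all `g ∈ G`, `k ∈ K`). -/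
def IsBX2PFolder {G : Type*} [Group G] (H : Subgroup G) (K : Set G)
    (τ : G ≃* G) : Prop :=
  ((1 : G) ∈ K) ∧
  (∀ u g : G, ∃! k, k ∈ K ∧ ∃ h ∈ H, g = u⁻¹ * h * u * k) ∧
  (∀ x ∈ K, x⁻¹ ∈ K) ∧
  (∀ x ∈ K, ∀ y ∈ K, x * y * x ∈ K) ∧
  (∀ k ∈ K, ∃ n : ℕ, orderOf k = 2 ^ n) ∧
  (∀ h ∈ H, ∀ k ∈ K, h * k * h⁻¹ ∈ K) ∧
  (∀ g : G, τ (τ g) = g) ∧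
  (∀ h ∈ H, τ h = h) ∧
  (∀ k ∈ K, τ k = k⁻¹) ∧
  (∀ g : G, ∀ k ∈ K, (τ g)⁻¹ * k * g ∈ K)

theorem folder_aux {G : Type*} [Group G] [Finite G]
    (H : Subgroup G) (K : Set G) (τ : G ≃* G)
    (hfolder : IsBX2PFolder H K τ) (U : Subgroup G) (hHU : H ≤ U)
    (hodd : ¬ 2 ∣ U.index) : U = ⊤ := by
  classical
  letI : Fintype G := Fintype.ofFinite G
  haveI : Fact (Nat.Prime 2) := ⟨Nat.prime_two⟩
  obtain ⟨h1K, htrans, hinvK, htwist, hord, hHK, hτ2, hτH, hτK, hτconj⟩ := hfolder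
  -- τ preserves U
  have hτU : ∀ x ∈ U, τ x ∈ U := by
    intro x hx
    obtain ⟨k, ⟨hkK, h, hh, hxe⟩, -⟩ := htrans 1 x
    simp only [inv_one, one_mul, mul_one] at hxe
    have hkU : k ∈ U := by
      have : k = h⁻¹ * x := by rw [hxe]; group
      rw [this]; exact U.mul_mem (U.inv_mem (hHU hh)) hx
    have : τ x = h * k⁻¹ := by rw [hxe, map_mul, hτH h hh, hτK k hkK]
    rw [this]; exact U.mul_mem (hHU hh) (U.inv_mem hkU)
  -- the twisted involution on G ⧸ U
  let lam : G → G ⧸ U → G ⧸ U := fun k =>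
    Quotient.map' (fun g => k⁻¹ * τ g) (by
      intro a b hab
      have hab' : a⁻¹ * b ∈ U := QuotientGroup.leftRel_apply.mp hab
      refine QuotientGroup.leftRel_apply.mpr ?_
      have : (k⁻¹ * τ a)⁻¹ * (k⁻¹ * τ b) = τ (a⁻¹ * b) := by
        rw [map_mul, map_inv]; group
      rw [this]; exact hτU _ hab')
  have lam_mk : ∀ k g : G, lam k (g : G ⧸ U) = ((k⁻¹ * τ g : G) : G ⧸ U) :=
    fun k g => rfl
  have lam_fix : ∀ k g : G, lam k (g : G ⧸ U) = (g : G ⧸ U) ↔ (τ g)⁻¹ * k * g ∈ U := by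
    intro k g
    rw [lam_mk, QuotientGroup.eq]
    have : (k⁻¹ * τ g)⁻¹ * g = (τ g)⁻¹ * k * g := by group
    rw [this]
  have lam_invol : ∀ k ∈ K, ∀ ω : G ⧸ U, lam k (lam k ω) = ω := by
    intro k hk ω
    induction ω using QuotientGroup.induction_on with
    | _ g =>
      rw [lam_mk, lam_mk]
      have : k⁻¹ * τ (k⁻¹ * τ g) = g := by
        rw [map_mul, map_inv, hτK k hk, hτ2]; group
      rw [this]
  -- counts
  have hcardΩ : Nat.card (G ⧸ U) = U.index := rfl
  -- per-ω count
  have hω : ∀ ω : G ⧸ U, Nat.card {k : ↥K // lam ↑k ω = ω} = H.relIndex U := by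
    intro ω
    induction ω using QuotientGroup.induction_on with
    | _ g =>
      have hΨmem : ∀ k : {k : ↥K // lam ↑k (g : G ⧸ U) = (g : G ⧸ U)},
          g⁻¹ * (k.1 : G)⁻¹ * τ g ∈ U := by
        intro k
        have h1 : (τ g)⁻¹ * (k.1 : G) * g ∈ U := (lam_fix _ g).mp k.2
        have : g⁻¹ * (k.1 : G)⁻¹ * τ g = ((τ g)⁻¹ * (k.1 : G) * g)⁻¹ := by group
        rw [this]; exact U.inv_mem h1
      let Ψ : {k : ↥K // lam ↑k (g : G ⧸ U) = (g : G ⧸ U)} → U ⧸ H.subgroupOf U :=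
        fun k => QuotientGroup.mk ⟨g⁻¹ * (k.1 : G)⁻¹ * τ g, hΨmem k⟩
      have hΨbij : Function.Bijective Ψ := by
        constructor
        · rintro ⟨⟨k, hkK⟩, hkfix⟩ ⟨⟨k', hk'K⟩, hk'fix⟩ he
          have h1 := QuotientGroup.eq.mp he
          rw [Subgroup.mem_subgroupOf] at h1
          have h1' : (τ g)⁻¹ * (k * k'⁻¹) * τ g ∈ H := by
            have hre : ((τ g)⁻¹ * (k * k'⁻¹) * τ g) =
                (g⁻¹ * k⁻¹ * τ g)⁻¹ * (g⁻¹ * k'⁻¹ * τ g) := by group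
            rw [hre]; exact h1
          obtain ⟨k₀, -, huniq⟩ := htrans ((τ g)⁻¹) k
          have e1 : k₀ = k := (huniq k ⟨hkK, 1, H.one_mem, by group⟩).symm
          have e2 : k₀ = k' := (huniq k' ⟨hk'K, (τ g)⁻¹ * (k * k'⁻¹) * τ g, h1', by group⟩).symm
          simp only [Subtype.mk.injEq]
          rw [← e1, e2]
        · intro q
          induction q using QuotientGroup.induction_on with
          | _ u =>
            obtain ⟨k, ⟨hkK, h, hh, hxe⟩, -⟩ := htrans ((τ g)⁻¹) (τ g * (u : G)⁻¹ * g⁻¹)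
            simp only [inv_inv] at hxe
            have hkval : k = τ g * h⁻¹ * (u : G)⁻¹ * g⁻¹ := by
              have h2 : (τ g * h * (τ g)⁻¹)⁻¹ * (τ g * (u : G)⁻¹ * g⁻¹) = k := by
                rw [hxe]; group
              rw [← h2]; group
            have hfix : lam k (g : G ⧸ U) = (g : G ⧸ U) := by
              rw [lam_fix]
              have : (τ g)⁻¹ * k * g = h⁻¹ * (u : G)⁻¹ := by rw [hkval]; group
              rw [this]
              exact U.mul_mem (U.inv_mem (hHU hh)) (U.inv_mem u.2)
            refine ⟨⟨⟨k, hkK⟩, hfix⟩, ?_⟩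
            show ((⟨g⁻¹ * k⁻¹ * τ g, hΨmem ⟨⟨k, hkK⟩, hfix⟩⟩ : U) : U ⧸ H.subgroupOf U) =
              ((u : U) : U ⧸ H.subgroupOf U)
            rw [QuotientGroup.eq, Subgroup.mem_subgroupOf]
            have hco : (((⟨g⁻¹ * k⁻¹ * τ g, hΨmem ⟨⟨k, hkK⟩, hfix⟩⟩ : U)⁻¹ * u : U) : G) =
                (g⁻¹ * k⁻¹ * τ g)⁻¹ * (u : G) := rfl
            rw [hco]
            have : (g⁻¹ * k⁻¹ * τ g)⁻¹ * (u : G) = h⁻¹ := by rw [hkval]; group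
            rw [this]; exact H.inv_mem hh
      have := Nat.card_eq_of_bijective Ψ hΨbij
      rw [this]; rfl
  -- total count of K
  have hKcard : Nat.card ↥K = H.index := by
    have hbij : Function.Bijective (fun k : ↥K => (((k : G)⁻¹ : G) : G ⧸ H)) := by
      constructor
      · rintro ⟨k, hkK⟩ ⟨k', hk'K⟩ he
        have h1 := QuotientGroup.eq.mp he
        have h1' : k * k'⁻¹ ∈ H := by
          have hre : k * k'⁻¹ = ((k : G)⁻¹)⁻¹ * k'⁻¹ := by group
          rw [hre]; exact h1
        obtain ⟨k₀, -, huniq⟩ := htrans 1 k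
        have e1 : k₀ = k := (huniq k ⟨hkK, 1, H.one_mem, by group⟩).symm
        have e2 : k₀ = k' := (huniq k' ⟨hk'K, k * k'⁻¹, h1', by group⟩).symm
        exact Subtype.ext (show k = k' by rw [← e1, e2])
      · intro x
        induction x using QuotientGroup.induction_on with
        | _ x =>
          obtain ⟨k, ⟨hkK, h, hh, hxe⟩, -⟩ := htrans 1 x⁻¹
          simp only [inv_one, one_mul, mul_one] at hxe
          refine ⟨⟨k, hkK⟩, ?_⟩
          show ((k⁻¹ : G) : G ⧸ H) = (x : G ⧸ H)
          rw [QuotientGroup.eq]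
          have hx : x = k⁻¹ * h⁻¹ := by rw [← inv_inv x, hxe]; group
          have : (k⁻¹ : G)⁻¹ * x = h⁻¹ := by rw [hx]; group
          rw [this]; exact H.inv_mem hh
    exact Nat.card_eq_of_bijective _ hbij
  -- parity of fixed point counts
  have hoddcard : ∀ k ∈ K, (Nat.card {ω : G ⧸ U // lam k ω = ω}) % 2 = 1 := by
    intro k hk
    let F : Function.End (G ⧸ U) := lam k
    have hpow : F ^ (2 : ℕ) ^ (1 : ℕ) = 1 := by
      have h2 : ((2 : ℕ) ^ (1 : ℕ)) = 2 := by norm_num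
      rw [h2, pow_two]
      funext ω
      show lam k (lam k ω) = ω
      exact lam_invol k hk ω
    have hmod := Equiv.Perm.card_fixedPoints_modEq (p := 2) (n := 1) hpow
    have hc1 : Nat.card {ω : G ⧸ U // lam k ω = ω}
        = Fintype.card (Function.fixedPoints F) := by
      rw [← Nat.card_eq_fintype_card]
      exact Nat.card_congr (Equiv.subtypeEquivRight fun ω => Iff.rfl)
    have hc2 : Fintype.card (G ⧸ U) % 2 = 1 := by
      have hnc : Nat.card (G ⧸ U) = Fintype.card (G ⧸ U) := Nat.card_eq_fintype_card
      rw [hcardΩ] at hnc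
      omega
    rw [hc1]
    unfold Nat.ModEq at hmod
    omega
  -- double counting
  have e1 : {p : ↥K × (G ⧸ U) // lam ↑p.1 p.2 = p.2}
      ≃ Σ k : ↥K, {ω : G ⧸ U // lam ↑k ω = ω} :=
    Equiv.subtypeProdEquivSigmaSubtype (fun (k : ↥K) (ω : G ⧸ U) => lam ↑k ω = ω)
  have e2 : {p : ↥K × (G ⧸ U) // lam ↑p.1 p.2 = p.2}
      ≃ Σ ω : G ⧸ U, {k : ↥K // lam ↑k ω = ω} :=
    ((Equiv.prodComm _ _).subtypeEquiv (fun p => Iff.rfl)).trans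
      (Equiv.subtypeProdEquivSigmaSubtype (fun (ω : G ⧸ U) (k : ↥K) => lam ↑k ω = ω))
  have hsum : ∑ k : ↥K, Nat.card {ω : G ⧸ U // lam ↑k ω = ω}
      = ∑ ω : G ⧸ U, Nat.card {k : ↥K // lam ↑k ω = ω} := by
    have h1 := Nat.card_congr (e1.symm.trans e2)
    rw [Nat.card_eq_fintype_card, Nat.card_eq_fintype_card,
      Fintype.card_sigma, Fintype.card_sigma] at h1
    simpa [Nat.card_eq_fintype_card] using h1
  have htot : ∑ k : ↥K, Nat.card {ω : G ⧸ U // lam ↑k ω = ω} = Nat.card ↥K := by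
    rw [hsum, Finset.sum_congr rfl (fun ω _ => hω ω), Finset.sum_const, smul_eq_mul,
      Finset.card_univ, hKcard, ← Subgroup.relIndex_mul_index hHU]
    rw [← Nat.card_eq_fintype_card, hcardΩ, Nat.mul_comm]
  have hone : ∀ k : ↥K, Nat.card {ω : G ⧸ U // lam ↑k ω = ω} = 1 := by
    have hle : ∀ k ∈ Finset.univ (α := ↥K),
        1 ≤ Nat.card {ω : G ⧸ U // lam ↑k ω = ω} := by
      intro k _
      have := hoddcard k k.2
      omega
    have hsum_eq : ∑ _k : ↥K, (1 : ℕ) = ∑ k : ↥K, Nat.card {ω : G ⧸ U // lam ↑k ω = ω} := by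
      rw [htot]; simp [Nat.card_eq_fintype_card]
    intro k
    exact ((Finset.sum_eq_sum_iff_of_le hle).mp hsum_eq k (Finset.mem_univ k)).symm
  -- squares descend
  have hk2 : ∀ k ∈ K, k * k ∈ U → k ∈ U := by
    intro k hk hk2U
    have hfix1 : lam 1 (((1 : G)) : G ⧸ U) = (((1 : G)) : G ⧸ U) := by
      rw [lam_fix]; simpa using U.one_mem
    have hfixk : lam 1 ((k : G) : G ⧸ U) = ((k : G) : G ⧸ U) := by
      rw [lam_fix, hτK k hk]
      simpa using hk2U
    have hcard1 := hone ⟨1, h1K⟩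
    rw [Nat.card_eq_one_iff_unique] at hcard1
    haveI hsub := hcard1.1
    have heq : (⟨((k : G) : G ⧸ U), hfixk⟩ :
          {ω : G ⧸ U // lam ↑(⟨1, h1K⟩ : ↥K) ω = ω})
        = ⟨(((1 : G)) : G ⧸ U), hfix1⟩ := Subsingleton.elim _ _
    have hq : ((k : G) : G ⧸ U) = (((1 : G)) : G ⧸ U) := congrArg Subtype.val heq
    have hmem := QuotientGroup.eq.mp hq
    have : k⁻¹ ∈ U := by simpa using hmem
    simpa using U.inv_mem this
  -- induction on the order
  have horder : ∀ n : ℕ, ∀ k ∈ K, orderOf k ≤ n → k ∈ U := by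
    intro n
    induction n with
    | zero =>
      intro k hk hle
      exact absurd hle (by simpa using (orderOf_pos k).ne')
    | succ n ih =>
      intro k hk hle
      rcases eq_or_ne k 1 with rfl | hne
      · exact U.one_mem
      obtain ⟨m, hm⟩ := hord k hk
      have hm0 : m ≠ 0 := by
        intro h0; rw [h0, pow_zero] at hm; exact hne (orderOf_eq_one_iff.mp hm)
      have hk2K : k * k ∈ K := by
        have := htwist k hk 1 h1K; simpa using this
      have hko : orderOf (k * k) = 2 ^ (m - 1) := by
        have hsq : k * k = k ^ (2 : ℕ) := (sq k).symm
        rw [hsq, orderOf_pow, hm]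
        have hg : Nat.gcd (2 ^ m) 2 = 2 := by
          rw [Nat.gcd_comm]
          exact Nat.gcd_eq_left (dvd_pow_self 2 hm0)
        rw [hg]
        obtain ⟨j, rfl⟩ := Nat.exists_eq_succ_of_ne_zero hm0
        rw [pow_succ, Nat.succ_sub_one]
        exact Nat.mul_div_cancel _ (by norm_num)
      have hlt : orderOf (k * k) ≤ n := by
        have h1 : 2 ^ (m - 1) < 2 ^ m :=
          Nat.pow_lt_pow_right (by norm_num) (Nat.sub_lt (Nat.pos_of_ne_zero hm0) one_pos)
        omega
      exact hk2 k hk (ih (k * k) hk2K hlt)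
  have hKU : ∀ k ∈ K, k ∈ U := fun k hk => horder (orderOf k) k hk le_rfl
  rw [eq_top_iff]
  intro g _
  obtain ⟨k, ⟨hkK, h, hh, hge⟩, -⟩ := htrans 1 g
  simp only [inv_one, one_mul, mul_one] at hge
  rw [hge]
  exact U.mul_mem (hHU hh) (hKU k hkK)

/-- If `(G,H,K)` is a BX2P-folder, then `H` is a 2-group if and
only if `G` is a 2-group. -/
theorem H_two_group_iff_G_two_group {G : Type*} [Group G] [Finite G]
    (H : Subgroup G) (K : Set G) (τ : G ≃* G)
    (hfolder : IsBX2PFolder H K τ) :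
    IsPGroup 2 H ↔ IsPGroup 2 G := by

  constructor
  · intro hH
    haveI : Fact (Nat.Prime 2) := ⟨Nat.prime_two⟩
    obtain ⟨P, hHP⟩ := hH.exists_le_sylow
    have hPtop : (P : Subgroup G) = ⊤ :=
      folder_aux H K τ hfolder P hHP (P.not_dvd_index)
    have h2 : IsPGroup 2 (⊤ : Subgroup G) := hPtop ▸ P.isPGroup'
    exact h2.of_equiv Subgroup.topEquiv
  · intro hG
    exact hG.to_subgroup H
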